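/- arXiv:2301.05877 — 2 statements merged into one kernel-verified Lean document; each statement's English description precedes it below -/
import Mathlib

section
/- Let Λ be a finite graph and Λ' a subgraph of Λ such that Λ is a strong forest relative to Λ'. Let k be the number of connected components of Λ that are disjoint from Λ'. Then χ(Λ) ≥ k + χ(Λ'), where χ denotes the Euler characteristic (number of vertices minus number of edges). -/
/-- A combinatorial graph (Serre style): edges come with a fixed-point-free
reversal involution; loops and multiple edges are allowed. -/
structure SGraph where
  V : Type
  E : Type
  init : E → V
  bar : E → E
  bar_bar : ∀ e, bar (bar e) = e
  bar_ne : ∀ e, bar e ≠ e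

namespace SGraph

variable (G : SGraph)

/-- Terminal vertex of an edge. -/
def term (e : G.E) : G.V := G.init (G.bar e)

/-- Consecutive edges of the list match up. -/
def IsChain (l : List G.E) : Prop :=
  List.Chain' (fun e f => G.term e = G.init f) l

/-- A cycle: a nonempty closed edge path. -/
def IsCycle (l : List G.E) : Prop :=
  l ≠ [] ∧ G.IsChain l ∧
    ∀ e f, l.head? = some e → l.getLast? = some f → G.term f = G.init e

/-- A reduced cycle: no edge is followed (cyclically) by its reverse. -/
def IsReducedCycle (l : List G.E) : Prop :=
  G.IsCycle l ∧ List.Chain' (fun e f => f ≠ G.bar e) l ∧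
    ∀ e f, l.head? = some e → l.getLast? = some f → e ≠ G.bar f

/-- A graph is a forest if it contains no reduced cycle. -/
def IsForestGraph : Prop := ∀ l, ¬ G.IsReducedCycle l

/-- A subgraph: a set of vertices and a set of edges, closed under reversal,
with endpoints among the chosen vertices. -/
structure Subgraph (G : SGraph) where
  verts : Set G.V
  edges : Set G.E
  bar_mem : ∀ ⦃e⦄, e ∈ edges → G.bar e ∈ edges
  init_mem : ∀ ⦃e⦄, e ∈ edges → G.init e ∈ verts

variable {G}

namespace Subgraph

/-- Subgraph containment. -/
def le (H K : Subgraph G) : Prop := H.verts ⊆ K.verts ∧ H.edges ⊆ K.edges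

/-- Intersection of two subgraphs. -/
def inter (H K : Subgraph G) : Subgraph G where
  verts := H.verts ∩ K.verts
  edges := H.edges ∩ K.edges
  bar_mem := fun _ he => ⟨H.bar_mem he.1, K.bar_mem he.2⟩
  init_mem := fun _ he => ⟨H.init_mem he.1, K.init_mem he.2⟩

/-- All edges of the list lie in the subgraph. -/
def EdgesIn (H : Subgraph G) (l : List G.E) : Prop := ∀ e ∈ l, e ∈ H.edges

/-- A reduced cycle contained in the subgraph. -/
def IsReducedCycleIn (H : Subgraph G) (l : List G.E) : Prop :=
  G.IsReducedCycle l ∧ H.EdgesIn l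

/-- A subgraph is a forest if it contains no reduced cycle. -/
def IsForest (H : Subgraph G) : Prop := ∀ l, ¬ H.IsReducedCycleIn l

/-- Reachability inside a subgraph by edge paths. -/
inductive Reaches (H : Subgraph G) : G.V → G.V → Prop
  | refl (v : G.V) (hv : v ∈ H.verts) : Reaches H v v
  | step (e : G.E) (he : e ∈ H.edges) {q : G.V} (h : Reaches H (G.term e) q) :
      Reaches H (G.init e) q

/-- A subgraph is connected if it is nonempty and any two of its vertices are
joined by an edge path in it. -/
def Connected (H : Subgraph G) : Prop :=
  H.verts.Nonempty ∧ ∀ p ∈ H.verts, ∀ q ∈ H.verts, H.Reaches p q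

/-- A tree is a connected forest. -/
def IsTree (H : Subgraph G) : Prop := H.IsForest ∧ H.Connected

/-- `C` is a connected component of `H`: its vertices form a reachability class
of `H` and its edges are the induced ones. -/
def IsCompOf (C H : Subgraph G) : Prop :=
  ∃ v ∈ H.verts, C.verts = {w | H.Reaches v w} ∧
    C.edges = {e | e ∈ H.edges ∧ G.init e ∈ C.verts}

/-- `H` is a forest relative to `H'`: every reduced cycle of `H` is contained
in `H'`. -/
def ForestRel (H H' : Subgraph G) : Prop :=
  ∀ l, H.IsReducedCycleIn l → H'.EdgesIn l

/-- `H` is a strong forest relative to `H'`: a relative forest such that each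
component of `H` meets `H'` in an empty or connected subgraph. -/
def StrongForestRel (H H' : Subgraph G) : Prop :=
  H.ForestRel H' ∧
    ∀ C : Subgraph G, C.IsCompOf H → (C.inter H').verts = ∅ ∨ (C.inter H').Connected

/-- Euler characteristic: number of vertices minus number of (geometric)
edges; each geometric edge corresponds to a pair `{e, ē}`. -/
noncomputable def eulerChar (H : Subgraph G) : ℤ :=
  (H.verts.ncard : ℤ) - ((H.edges.ncard / 2 : ℕ) : ℤ)

/-- A walk in `H` from `p` to `q`, given as its list of traversed edges. -/
def IsWalk (H : Subgraph G) (p q : G.V) (l : List G.E) : Prop :=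
  H.EdgesIn l ∧ G.IsChain l ∧
    (∀ e, l.head? = some e → G.init e = p) ∧
    (∀ e, l.getLast? = some e → G.term e = q) ∧
    (l = [] → p = q ∧ p ∈ H.verts)

/-- The weight-0 subgraph of a zero/one-weighted subgraph: all of its vertices
together with its edges of weight 0. -/
def zeroSub (H : Subgraph G) (ω : G.E → ℕ) (hbar : ∀ e, ω (G.bar e) = ω e) :
    Subgraph G where
  verts := H.verts
  edges := {e | e ∈ H.edges ∧ ω e = 0}
  bar_mem := fun e he => ⟨H.bar_mem he.1, by rw [hbar]; exact he.2⟩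
  init_mem := fun _ he => H.init_mem he.1

end Subgraph

/-- The full subgraph of a graph. -/
def full (G : SGraph) : Subgraph G where
  verts := Set.univ
  edges := Set.univ
  bar_mem := fun _ _ => Set.mem_univ _
  init_mem := fun _ _ => Set.mem_univ _

open Classical in
/-- The quotient graph `G/H'` obtained by identifying the subgraph `H'` to a
single vertex `∗` (represented by `none`): its vertices are the vertices of
`G` not in `H'` together with `∗`; its edges are the edges of `G` not in `H'`,
with endpoints in `H'` replaced by `∗`. -/
noncomputable def quot (G : SGraph) (H' : Subgraph G) : SGraph where
  V := Option {v : G.V // v ∉ H'.verts}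
  E := {e : G.E // e ∉ H'.edges}
  init e := if h : G.init e.1 ∈ H'.verts then none else some ⟨G.init e.1, h⟩
  bar e := ⟨G.bar e.1, fun hc => e.2 (by simpa [G.bar_bar] using H'.bar_mem hc)⟩
  bar_bar e := Subtype.ext (G.bar_bar e.1)
  bar_ne e := fun hc => G.bar_ne e.1 (congrArg Subtype.val hc)

end SGraph
section Aux

namespace SGraph

variable {G : SGraph}

lemma term_bar (e : G.E) : G.term (G.bar e) = G.init e := by
  unfold term; rw [G.bar_bar]

lemma bar_inj {e f : G.E} (h : G.bar e = G.bar f) : e = f := by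
  have h2 := congrArg G.bar h
  rwa [G.bar_bar, G.bar_bar] at h2

namespace Subgraph

lemma ext' {H K : Subgraph G} (hv : H.verts = K.verts) (he : H.edges = K.edges) : H = K := by
  cases H; cases K; simp_all

lemma Reaches.right_mem {H : Subgraph G} {p q : G.V} (h : H.Reaches p q) : q ∈ H.verts := by
  induction h with
  | refl v hv => exact hv
  | step e he h ih => exact ih

lemma Reaches.trans {H : Subgraph G} {p q r : G.V} (h1 : H.Reaches p q) :
    H.Reaches q r → H.Reaches p r := by
  induction h1 with
  | refl v hv => exact id
  | step e he h ih => exact fun h2 => .step e he (ih h2)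

lemma Reaches.single {H : Subgraph G} {e : G.E} (he : e ∈ H.edges) :
    H.Reaches (G.init e) (G.term e) :=
  .step e he (.refl _ (H.init_mem (H.bar_mem he)))

lemma Reaches.single' {H : Subgraph G} {e : G.E} (he : e ∈ H.edges) :
    H.Reaches (G.term e) (G.init e) := by
  have h := Reaches.single (H.bar_mem he)
  rw [term_bar] at h
  exact h

lemma Reaches.symm {H : Subgraph G} {p q : G.V} (h : H.Reaches p q) : H.Reaches q p := by
  induction h with
  | refl v hv => exact .refl v hv
  | step e he h ih => exact ih.trans (Reaches.single' he)

lemma Reaches.mono {H K : Subgraph G} (hv : H.verts ⊆ K.verts) (he : H.edges ⊆ K.edges)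
    {p q : G.V} (h : H.Reaches p q) : K.Reaches p q := by
  induction h with
  | refl v hv' => exact .refl v (hv hv')
  | step e he' h ih => exact .step e (he he') ih

/-- The connected component of `v` in `H`. -/
def compOf (H : Subgraph G) (v : G.V) : Subgraph G where
  verts := {w | H.Reaches v w}
  edges := {f | f ∈ H.edges ∧ H.Reaches v (G.init f)}
  bar_mem := fun f hf => ⟨H.bar_mem hf.1, hf.2.trans (Reaches.single hf.1)⟩
  init_mem := fun f hf => hf.2

lemma mem_compOf_self {H : Subgraph G} {v : G.V} (hv : v ∈ H.verts) : v ∈ (compOf H v).verts :=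
  .refl v hv

lemma compOf_verts_subset {H : Subgraph G} {v : G.V} : (compOf H v).verts ⊆ H.verts :=
  fun _ hw => Reaches.right_mem hw

lemma compOf_congr {H : Subgraph G} {v w : G.V} (h : H.Reaches v w) :
    compOf H v = compOf H w := by
  apply ext'
  · ext x; exact ⟨fun hx => h.symm.trans hx, fun hx => h.trans hx⟩
  · ext f; exact ⟨fun hf => ⟨hf.1, h.symm.trans hf.2⟩, fun hf => ⟨hf.1, h.trans hf.2⟩⟩

lemma isCompOf_iff {C H : Subgraph G} :
    C.IsCompOf H ↔ ∃ v ∈ H.verts, C = compOf H v := by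
  constructor
  · rintro ⟨v, hv, h1, h2⟩
    refine ⟨v, hv, ext' h1 ?_⟩
    rw [h2, h1]; rfl
  · rintro ⟨v, hv, rfl⟩
    exact ⟨v, hv, rfl, rfl⟩

lemma IsCompOf.eq_compOf {C H : Subgraph G} {w : G.V} (hC : C.IsCompOf H) (hw : w ∈ C.verts) :
    C = compOf H w := by
  obtain ⟨v, hv, rfl⟩ := isCompOf_iff.mp hC
  exact compOf_congr hw

lemma IsCompOf.verts_subset {C H : Subgraph G} (hC : C.IsCompOf H) : C.verts ⊆ H.verts := by
  obtain ⟨v, hv, rfl⟩ := isCompOf_iff.mp hC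
  exact compOf_verts_subset

/-- `H` with the geometric edge `{e, ē}` removed. -/
def erase (H : Subgraph G) (e : G.E) : Subgraph G where
  verts := H.verts
  edges := H.edges \ {e, G.bar e}
  bar_mem := by
    rintro f ⟨hf1, hf2⟩
    refine ⟨H.bar_mem hf1, fun hc => hf2 ?_⟩
    simp only [Set.mem_insert_iff, Set.mem_singleton_iff] at hc ⊢
    rcases hc with hc | hc
    · exact Or.inr (by rw [← hc, G.bar_bar])
    · exact Or.inl (bar_inj hc)
  init_mem := fun f hf => H.init_mem hf.1

lemma erase_verts {H : Subgraph G} {e : G.E} : (H.erase e).verts = H.verts := rfl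

lemma erase_edges {H : Subgraph G} {e : G.E} : (H.erase e).edges = H.edges \ {e, G.bar e} := rfl

lemma mem_erase_edges {H : Subgraph G} {e f : G.E} :
    f ∈ (H.erase e).edges ↔ f ∈ H.edges ∧ f ≠ e ∧ f ≠ G.bar e := by
  simp only [erase_edges, Set.mem_diff, Set.mem_insert_iff, Set.mem_singleton_iff, not_or]

end Subgraph

end SGraph

end Aux
section Aux2

namespace SGraph

namespace Subgraph

variable {G : SGraph}

lemma IsWalk.tail {H : Subgraph G} {p q : G.V} {f : G.E} {t : List G.E}
    (h : H.IsWalk p q (f :: t)) : H.IsWalk (G.term f) q t := by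
  obtain ⟨hE, hC, hh, hl, he⟩ := h
  refine ⟨fun x hx => hE x (List.mem_cons_of_mem _ hx), hC.tail, ?_, ?_, ?_⟩
  · intro g hg
    cases t with
    | nil => simp at hg
    | cons g' t' =>
        simp only [List.head?_cons, Option.some.injEq] at hg
        subst hg
        exact ((List.isChain_cons_cons.mp hC).1).symm
  · intro g hg
    cases t with
    | nil => simp at hg
    | cons g' t' => exact hl g (by rw [List.getLast?_cons_cons]; exact hg)
  · intro ht
    subst ht
    exact ⟨hl f rfl, H.init_mem (H.bar_mem (hE f List.mem_cons_self))⟩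

lemma IsWalk.cons {H : Subgraph G} {q : G.V} {f : G.E} {t : List G.E}
    (hf : f ∈ H.edges) (h : H.IsWalk (G.term f) q t) : H.IsWalk (G.init f) q (f :: t) := by
  obtain ⟨hE, hC, hh, hl, he⟩ := h
  refine ⟨?_, ?_, ?_, ?_, ?_⟩
  · intro x hx
    rcases List.mem_cons.mp hx with rfl | hx
    · exact hf
    · exact hE x hx
  · cases t with
    | nil => exact List.isChain_singleton f
    | cons g t' => exact List.isChain_cons_cons.mpr ⟨(hh g rfl).symm, hC⟩
  · intro g hg
    simp only [List.head?_cons, Option.some.injEq] at hg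
    subst hg; rfl
  · intro g hg
    cases t with
    | nil =>
        simp only [List.getLast?_singleton, Option.some.injEq] at hg
        subst hg
        exact (he rfl).1
    | cons g' t' =>
        rw [List.getLast?_cons_cons] at hg
        exact hl g hg
  · intro h0; simp at h0

lemma Reaches.exists_walk {H : Subgraph G} {p q : G.V} (h : H.Reaches p q) :
    ∃ l, H.IsWalk p q l := by
  induction h with
  | refl v hv =>
      exact ⟨[], fun x hx => absurd hx List.not_mem_nil, List.isChain_nil,
        fun e he => by simp at he, fun e he => by simp at he, fun _ => ⟨rfl, hv⟩⟩
  | step e he h ih =>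
      obtain ⟨l, hl⟩ := ih
      exact ⟨e :: l, hl.cons he⟩

lemma exists_reduced_walk {H : Subgraph G} :
    ∀ (n : ℕ) (l : List G.E) (p q : G.V), l.length ≤ n → H.IsWalk p q l →
      ∃ l', H.IsWalk p q l' ∧ List.Chain' (fun a b => b ≠ G.bar a) l' := by
  intro n
  induction n with
  | zero =>
      intro l p q hl hw
      rw [Nat.le_zero, List.length_eq_zero_iff] at hl
      subst hl
      exact ⟨[], hw, List.isChain_nil⟩
  | succ n ih =>
      intro l p q hl hw
      match l with
      | [] => exact ⟨[], hw, List.isChain_nil⟩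
      | a :: t =>
        have hp : G.init a = p := hw.2.2.1 a rfl
        have ht : t.length ≤ n := by simp only [List.length_cons] at hl; omega
        obtain ⟨l', hl', hred⟩ := ih t (G.term a) q ht hw.tail
        cases l' with
        | nil =>
            refine ⟨[a], ?_, List.isChain_singleton a⟩
            have h2 := IsWalk.cons (hw.1 a List.mem_cons_self) hl'
            rwa [hp] at h2
        | cons f t' =>
            by_cases hfa : f = G.bar a
            · have h2 := hl'.tail
              have hterm : G.term f = p := by rw [hfa, term_bar, hp]
              rw [hterm] at h2
              exact ⟨t', h2, hred.tail⟩
            · refine ⟨a :: f :: t', ?_, List.isChain_cons_cons.mpr ⟨hfa, hred⟩⟩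
              have h2 := IsWalk.cons (hw.1 a List.mem_cons_self) hl'
              rwa [hp] at h2

lemma IsWalk.mono {H K : Subgraph G} (hv : H.verts ⊆ K.verts) (he : H.edges ⊆ K.edges)
    {p q : G.V} {l : List G.E} (h : H.IsWalk p q l) : K.IsWalk p q l :=
  ⟨fun x hx => he (h.1 x hx), h.2.1, h.2.2.1, h.2.2.2.1,
    fun h0 => ⟨(h.2.2.2.2 h0).1, hv (h.2.2.2.2 h0).2⟩⟩

lemma not_reaches_erase {H L : Subgraph G} (hF : H.ForestRel L) {e : G.E}
    (he : e ∈ H.edges) (heL : e ∉ L.edges) :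
    ¬ (H.erase e).Reaches (G.term e) (G.init e) := by
  intro hr
  obtain ⟨l0, hl0⟩ := hr.exists_walk
  obtain ⟨l, hw, hred⟩ := exists_reduced_walk l0.length l0 _ _ le_rfl hl0
  have hwH : H.IsWalk (G.term e) (G.init e) l := IsWalk.mono (H := H.erase e) (K := H) (fun x hx => hx) (fun x hx => (mem_erase_edges.mp hx).1) hw
  have hcons := IsWalk.cons he hwH
  have hcyc : H.IsReducedCycleIn (e :: l) := by
    refine ⟨⟨⟨List.cons_ne_nil e l, hcons.2.1, ?_⟩, ?_, ?_⟩, fun x hx => hcons.1 x hx⟩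
    · intro f g hf hg
      simp only [List.head?_cons, Option.some.injEq] at hf
      subst hf
      exact hcons.2.2.2.1 g hg
    · cases l with
      | nil => exact List.isChain_singleton e
      | cons f t =>
          refine List.isChain_cons_cons.mpr ⟨?_, hred⟩
          have hmem := hw.1 f List.mem_cons_self
          exact (mem_erase_edges.mp hmem).2.2
    · intro f g hf hg
      simp only [List.head?_cons, Option.some.injEq] at hf
      subst hf
      cases l with
      | nil =>
          simp only [List.getLast?_singleton, Option.some.injEq] at hg
          subst hg
          exact fun hc => G.bar_ne e hc.symm
      | cons f' t =>
          rw [List.getLast?_cons_cons] at hg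
          have hgmem : g ∈ f' :: t := List.mem_of_getLast? hg
          have hge := hw.1 g hgmem
          intro hc
          exact (mem_erase_edges.mp hge).2.2 (by rw [hc, G.bar_bar])
  exact heL (hF _ hcyc e List.mem_cons_self)

lemma reaches_cases {H : Subgraph G} {e : G.E} (he : e ∈ H.edges) {p q : G.V}
    (h : H.Reaches p q) :
    (H.erase e).Reaches p q ∨
      ((H.erase e).Reaches p (G.init e) ∧ (H.erase e).Reaches (G.term e) q) ∨
      ((H.erase e).Reaches p (G.term e) ∧ (H.erase e).Reaches (G.init e) q) := by
  have hav : G.init e ∈ (H.erase e).verts := H.init_mem he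
  have hbv : G.term e ∈ (H.erase e).verts := H.init_mem (H.bar_mem he)
  induction h with
  | refl v hv => exact Or.inl (.refl v hv)
  | step f hf h ih =>
      by_cases hfe : f = e
      · subst hfe
        rcases ih with h1 | h2 | h3
        · exact Or.inr (Or.inl ⟨.refl _ hav, h1⟩)
        · exact Or.inr (Or.inl ⟨.refl _ hav, h2.2⟩)
        · exact Or.inl h3.2
      · by_cases hfb : f = G.bar e
        · subst hfb
          rw [term_bar] at ih
          rcases ih with h1 | h2 | h3
          · exact Or.inr (Or.inr ⟨.refl _ hbv, h1⟩)
          · exact Or.inl h2.2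
          · exact Or.inr (Or.inr ⟨.refl _ hbv, h3.2⟩)
        · have hf' : f ∈ (H.erase e).edges := mem_erase_edges.mpr ⟨hf, hfe, hfb⟩
          rcases ih with h1 | h2 | h3
          · exact Or.inl (.step f hf' h1)
          · exact Or.inr (Or.inl ⟨.step f hf' h2.1, h2.2⟩)
          · exact Or.inr (Or.inr ⟨.step f hf' h3.1, h3.2⟩)

lemma compOf_erase_eq {H : Subgraph G} {e : G.E} (he : e ∈ H.edges) {v : G.V}
    (hna : ¬ H.Reaches v (G.init e)) : compOf H v = compOf (H.erase e) v := by
  have hmono : ∀ {x y : G.V}, (H.erase e).Reaches x y → H.Reaches x y :=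
    fun h => Reaches.mono (H := H.erase e) (K := H) (fun _ hx => hx) (fun _ hx => (mem_erase_edges.mp hx).1) h
  have hvw : ∀ w, H.Reaches v w ↔ (H.erase e).Reaches v w := by
    intro w
    constructor
    · intro h
      rcases reaches_cases he h with h1 | h2 | h3
      · exact h1
      · exact absurd (hmono h2.1) hna
      · exact absurd ((hmono h3.1).trans (Reaches.single' he)) hna
    · exact fun h => hmono h
  apply ext'
  · ext w; exact hvw w
  · ext f
    constructor
    · rintro ⟨hf1, hf2⟩
      refine ⟨mem_erase_edges.mpr ⟨hf1, ?_, ?_⟩, (hvw _).mp hf2⟩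
      · rintro rfl; exact hna hf2
      · rintro rfl; exact hna (hf2.trans (Reaches.single' he))
    · rintro ⟨hf1, hf2⟩
      exact ⟨(mem_erase_edges.mp hf1).1, (hvw _).mpr hf2⟩

instance {G : SGraph} [Finite G.V] [Finite G.E] : Finite (Subgraph G) :=
  Finite.of_injective (fun H : Subgraph G => (H.verts, H.edges))
    (fun a b h => ext' (congrArg Prod.fst h) (congrArg Prod.snd h))

lemma eulerChar_erase (H : Subgraph G) [Fintype G.E] {e : G.E} (he : e ∈ H.edges) :
    (H.erase e).eulerChar = H.eulerChar + 1 := by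
  have hsub : {e, G.bar e} ⊆ H.edges := by
    intro f hf
    rcases hf with rfl | hf
    · exact he
    · rw [Set.mem_singleton_iff] at hf; subst hf; exact H.bar_mem he
  have h2 : ({e, G.bar e} : Set G.E).ncard = 2 := Set.ncard_pair (fun h => G.bar_ne e h.symm)
  have hcard : (H.edges \ {e, G.bar e}).ncard + 2 = H.edges.ncard := by
    rw [← h2]
    exact Set.ncard_diff_add_ncard_of_subset hsub (Set.toFinite _)
  simp only [eulerChar, erase_verts, erase_edges]
  rw [← hcard]
  push_cast
  omega

end Subgraph

end SGraph

end Aux2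
section Aux3

namespace SGraph

namespace Subgraph

variable {G : SGraph}

lemma mem_compOf {H : Subgraph G} {v w : G.V} :
    w ∈ (compOf H v).verts ↔ H.Reaches v w := Iff.rfl

variable [Fintype G.V] [Fintype G.E]

lemma main_base (H L : Subgraph G) (hE : H.edges = L.edges) (hle : L.le H) :
    (({C : Subgraph G | C.IsCompOf H ∧ C.verts ∩ L.verts = ∅}.ncard : ℤ)) + L.eulerChar
      ≤ H.eulerChar := by
  classical
  have h1 : {C : Subgraph G | C.IsCompOf H ∧ C.verts ∩ L.verts = ∅}.ncard
      ≤ (H.verts \ L.verts).ncard := by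
    rcases isEmpty_or_nonempty G.V with hV | hV
    · have hempty : {C : Subgraph G | C.IsCompOf H ∧ C.verts ∩ L.verts = ∅} = ∅ := by
        ext C
        simp only [Set.mem_setOf_eq, Set.mem_empty_iff_false, iff_false, not_and]
        rintro ⟨v, hv, -⟩
        exact (IsEmpty.false v).elim
      rw [hempty]; simp
    · obtain ⟨v0⟩ := hV
      apply Set.ncard_le_ncard_of_injOn
        (fun C : Subgraph G => if h : C.verts.Nonempty then h.some else v0)
      · rintro C ⟨hC1, hC2⟩
        have hne : C.verts.Nonempty := by
          obtain ⟨v, hv, rfl⟩ := isCompOf_iff.mp hC1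
          exact ⟨v, mem_compOf_self hv⟩
        simp only [dif_pos hne]
        exact ⟨hC1.verts_subset hne.some_mem,
          fun hmem => Set.eq_empty_iff_forall_notMem.mp hC2 _ ⟨hne.some_mem, hmem⟩⟩
      · rintro C1 ⟨h1, -⟩ C2 ⟨h2, -⟩ hf
        have hne1 : C1.verts.Nonempty := by
          obtain ⟨v, hv, rfl⟩ := isCompOf_iff.mp h1
          exact ⟨v, mem_compOf_self hv⟩
        have hne2 : C2.verts.Nonempty := by
          obtain ⟨v, hv, rfl⟩ := isCompOf_iff.mp h2
          exact ⟨v, mem_compOf_self hv⟩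
        simp only [] at hf
        rw [dif_pos hne1, dif_pos hne2] at hf
        rw [h1.eq_compOf hne1.some_mem, h2.eq_compOf hne2.some_mem, hf]
  have h2 : (H.verts \ L.verts).ncard + L.verts.ncard = H.verts.ncard :=
    Set.ncard_diff_add_ncard_of_subset hle.1 (Set.toFinite _)
  simp only [eulerChar, hE]
  omega

lemma main_aux (n : ℕ) :
    ∀ (H L : Subgraph G), (H.edges \ L.edges).ncard ≤ n → L.le H → H.StrongForestRel L →
      (({C : Subgraph G | C.IsCompOf H ∧ C.verts ∩ L.verts = ∅}.ncard : ℤ)) + L.eulerChar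
        ≤ H.eulerChar := by
  induction n with
  | zero =>
      intro H L hn hle hSF
      have hemp : H.edges \ L.edges = ∅ :=
        (Set.ncard_eq_zero (Set.toFinite _)).mp (Nat.le_zero.mp hn)
      exact main_base H L (subset_antisymm (Set.diff_eq_empty.mp hemp) hle.2) hle
  | succ n ih =>
      intro H L hn hle hSF
      by_cases hxe : H.edges \ L.edges = ∅
      · exact main_base H L (subset_antisymm (Set.diff_eq_empty.mp hxe) hle.2) hle
      obtain ⟨e, heH, heL⟩ := Set.nonempty_iff_ne_empty.mpr hxe
      have hbarL : G.bar e ∉ L.edges := fun hc => heL (by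
        have h2 := L.bar_mem hc; rwa [G.bar_bar] at h2)
      have hsep : ¬ (H.erase e).Reaches (G.term e) (G.init e) :=
        not_reaches_erase hSF.1 heH heL
      have hsep' : ¬ (H.erase e).Reaches (G.init e) (G.term e) := fun h => hsep h.symm
      have hmono : ∀ {x y : G.V}, (H.erase e).Reaches x y → H.Reaches x y :=
        fun h => Reaches.mono (H := H.erase e) (K := H) (fun _ hx => hx)
          (fun _ hx => (mem_erase_edges.mp hx).1) h
      have hav : G.init e ∈ H.verts := H.init_mem heH
      have hbv : G.term e ∈ H.verts := H.init_mem (H.bar_mem heH)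
      have hRab : H.Reaches (G.init e) (G.term e) := Reaches.single heH
      have hLsub : L.edges ⊆ (H.erase e).edges := fun f hf =>
        mem_erase_edges.mpr ⟨hle.2 hf, fun h => heL (h ▸ hf), fun h => hbarL (h ▸ hf)⟩
      have hle' : L.le (H.erase e) := ⟨hle.1, hLsub⟩
      have haCa : G.init e ∈ (compOf (H.erase e) (G.init e)).verts := mem_compOf_self hav
      have hbCb : G.term e ∈ (compOf (H.erase e) (G.term e)).verts := mem_compOf_self hbv
      have haC : G.init e ∈ (compOf H (G.init e)).verts := mem_compOf_self hav
      have hCab : compOf H (G.init e) = compOf H (G.term e) := compOf_congr hRab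
      have hbC : G.term e ∈ (compOf H (G.init e)).verts := by
        rw [hCab]; exact mem_compOf_self hbv
      have hCcomp : (compOf H (G.init e)).IsCompOf H := isCompOf_iff.mpr ⟨_, hav, rfl⟩
      have hCaC : (compOf (H.erase e) (G.init e)).verts ⊆ (compOf H (G.init e)).verts :=
        fun x hx => hmono hx
      have hCbC : (compOf (H.erase e) (G.term e)).verts ⊆ (compOf H (G.init e)).verts := by
        rw [hCab]; exact fun x hx => hmono hx
      have hCaCb : ∀ x, x ∈ (compOf (H.erase e) (G.init e)).verts →
          x ∈ (compOf (H.erase e) (G.term e)).verts → False := fun x hx1 hx2 =>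
        hsep' ((mem_compOf.mp hx1).trans (mem_compOf.mp hx2).symm)
      have hCaCb_ne : compOf (H.erase e) (G.init e) ≠ compOf (H.erase e) (G.term e) :=
        fun h => hCaCb (G.term e) (by rw [h]; exact hbCb) hbCb
      have hnotCompa : ¬ (compOf (H.erase e) (G.init e)).IsCompOf H := by
        intro hcomp
        have h1 := hcomp.eq_compOf haCa
        have h2 : G.term e ∈ (compOf (H.erase e) (G.init e)).verts := by rw [h1]; exact hbC
        exact hsep' (mem_compOf.mp h2)
      have hnotCompb : ¬ (compOf (H.erase e) (G.term e)).IsCompOf H := by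
        intro hcomp
        have h1 := hcomp.eq_compOf hbCb
        have h2 : G.init e ∈ (compOf (H.erase e) (G.term e)).verts := by
          rw [h1, ← hCab]; exact haC
        exact hsep (mem_compOf.mp h2)
      have hCacomp' : (compOf (H.erase e) (G.init e)).IsCompOf (H.erase e) :=
        isCompOf_iff.mpr ⟨_, hav, rfl⟩
      have hCbcomp' : (compOf (H.erase e) (G.term e)).IsCompOf (H.erase e) :=
        isCompOf_iff.mpr ⟨_, hbv, rfl⟩
      have htrans2 : ∀ C0 : Subgraph G, C0.IsCompOf (H.erase e) →
          C0 ≠ compOf (H.erase e) (G.init e) → C0 ≠ compOf (H.erase e) (G.term e) →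
          C0.IsCompOf H := by
        intro C0 hC0 hna hnb
        obtain ⟨v, hv, rfl⟩ := isCompOf_iff.mp hC0
        have hnra : ¬ H.Reaches v (G.init e) := by
          intro hr
          rcases reaches_cases heH hr with h1 | h2 | h3
          · exact hna (compOf_congr h1)
          · exact hsep h2.2
          · exact hnb (compOf_congr h3.1)
        rw [← compOf_erase_eq heH hnra]
        exact isCompOf_iff.mpr ⟨v, hv, rfl⟩
      have htrans3 : ∀ C0 : Subgraph G, C0.IsCompOf H → C0 ≠ compOf H (G.init e) →
          C0.IsCompOf (H.erase e) := by
        intro C0 hC0 hne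
        obtain ⟨v, hv, rfl⟩ := isCompOf_iff.mp hC0
        have hnra : ¬ H.Reaches v (G.init e) := fun hr => hne (compOf_congr hr)
        rw [compOf_erase_eq heH hnra]
        exact isCompOf_iff.mpr ⟨v, hv, rfl⟩
      have hforest' : (H.erase e).ForestRel L := fun l hl =>
        hSF.1 l ⟨hl.1, fun x hx => (mem_erase_edges.mp (hl.2 x hx)).1⟩
      have caseB : ∀ (p w : G.V), p ∈ H.verts → (H.erase e).Reaches p w → w ∈ L.verts →
          (compOf (H.erase e) p).verts ⊆ (compOf H (G.init e)).verts →
          ((compOf (H.erase e) p).inter L = (compOf H (G.init e)).inter L ∧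
            ∀ u, u ∈ (compOf H (G.init e)).verts → u ∈ L.verts →
              u ∈ (compOf (H.erase e) p).verts) := by
        intro p w hp hw hwL hPsub
        have hwP : w ∈ (compOf (H.erase e) p).verts := mem_compOf.mpr hw
        have hwC : w ∈ (compOf H (G.init e)).verts := hPsub hwP
        have hconn : ((compOf H (G.init e)).inter L).Connected := by
          rcases hSF.2 _ hCcomp with hemp | hconn
          · exact (Set.eq_empty_iff_forall_notMem.mp hemp w ⟨hwC, hwL⟩).elim
          · exact hconn
        have hCVsub : ∀ u, u ∈ (compOf H (G.init e)).verts → u ∈ L.verts →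
            u ∈ (compOf (H.erase e) p).verts := by
          intro u hu huL
          have hr := hconn.2 w ⟨hwC, hwL⟩ u ⟨hu, huL⟩
          have hr' : (H.erase e).Reaches w u :=
            Reaches.mono (H := ((compOf H (G.init e)).inter L)) (K := H.erase e)
              (fun x hx => hle.1 hx.2) (fun f hf => hLsub hf.2) hr
          exact mem_compOf.mpr ((mem_compOf.mp hwP).trans hr')
        refine ⟨ext' ?_ ?_, hCVsub⟩
        · apply subset_antisymm
          · exact fun u hu => ⟨hPsub hu.1, hu.2⟩
          · exact fun u hu => ⟨hCVsub u hu.1 hu.2, hu.2⟩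
        · apply subset_antisymm
          · rintro f ⟨hf1, hf2⟩
            exact ⟨⟨(mem_erase_edges.mp hf1.1).1, hPsub hf1.2⟩, hf2⟩
          · rintro f ⟨hf1, hf2⟩
            exact ⟨⟨hLsub hf2, hCVsub _ hf1.2 (L.init_mem hf2)⟩, hf2⟩
      have tailB : ∀ (P Q : Subgraph G) (w : G.V),
          Q.IsCompOf (H.erase e) → ¬ Q.IsCompOf H →
          (∀ C0 : Subgraph G, C0.IsCompOf (H.erase e) → C0 ≠ P → C0 ≠ Q → C0.IsCompOf H) →
          w ∈ P.verts → w ∈ L.verts → w ∈ (compOf H (G.init e)).verts →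
          Q.verts ∩ L.verts = ∅ →
          P.inter L = (compOf H (G.init e)).inter L →
          (H.erase e).StrongForestRel L ∧
            {C0 : Subgraph G | C0.IsCompOf (H.erase e) ∧ C0.verts ∩ L.verts = ∅}.ncard
              = {C0 : Subgraph G | C0.IsCompOf H ∧ C0.verts ∩ L.verts = ∅}.ncard + 1 := by
        intro P Q w hQc hQnot htr hwP hwL hwC hQdisj hPinter
        have hstrong : (H.erase e).StrongForestRel L := by
          refine ⟨hforest', ?_⟩
          intro C0 hC0
          by_cases hp : C0 = P
          · rcases hSF.2 _ hCcomp with hemp | hconn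
            · rw [← hPinter] at hemp
              exact ((Set.eq_empty_iff_forall_notMem.mp hemp w ⟨hwP, hwL⟩)).elim
            · right; rw [hp, hPinter]; exact hconn
          · by_cases hq : C0 = Q
            · left; rw [hq]; exact hQdisj
            · exact hSF.2 C0 (htr C0 hC0 hp hq)
        refine ⟨hstrong, ?_⟩
        have hQS : Q ∉ {C0 : Subgraph G | C0.IsCompOf H ∧ C0.verts ∩ L.verts = ∅} :=
          fun h => hQnot h.1
        have heq : {C0 : Subgraph G | C0.IsCompOf (H.erase e) ∧ C0.verts ∩ L.verts = ∅}
            = insert Q {C0 : Subgraph G | C0.IsCompOf H ∧ C0.verts ∩ L.verts = ∅} := by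
          ext C0
          simp only [Set.mem_insert_iff, Set.mem_setOf_eq]
          constructor
          · rintro ⟨hc, hd⟩
            by_cases hq : C0 = Q
            · exact Or.inl hq
            · by_cases hp : C0 = P
              · exfalso; rw [hp] at hd
                exact Set.eq_empty_iff_forall_notMem.mp hd w ⟨hwP, hwL⟩
              · exact Or.inr ⟨htr C0 hc hp hq, hd⟩
          · rintro (rfl | ⟨hc, hd⟩)
            · exact ⟨hQc, hQdisj⟩
            · refine ⟨htrans3 C0 hc ?_, hd⟩
              rintro rfl
              exact Set.eq_empty_iff_forall_notMem.mp hd w ⟨hwC, hwL⟩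
        rw [heq, Set.ncard_insert_of_notMem hQS (Set.toFinite _)]
      obtain ⟨hSF', hcnt⟩ :
          (H.erase e).StrongForestRel L ∧
            {C0 : Subgraph G | C0.IsCompOf (H.erase e) ∧ C0.verts ∩ L.verts = ∅}.ncard
              = {C0 : Subgraph G | C0.IsCompOf H ∧ C0.verts ∩ L.verts = ∅}.ncard + 1 := by
        rcases Set.eq_empty_or_nonempty ((compOf H (G.init e)).verts ∩ L.verts) with hCV | hCV
        · have hdCa : (compOf (H.erase e) (G.init e)).verts ∩ L.verts = ∅ :=
            Set.eq_empty_iff_forall_notMem.mpr (fun u hu =>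
              Set.eq_empty_iff_forall_notMem.mp hCV u ⟨hCaC hu.1, hu.2⟩)
          have hdCb : (compOf (H.erase e) (G.term e)).verts ∩ L.verts = ∅ :=
            Set.eq_empty_iff_forall_notMem.mpr (fun u hu =>
              Set.eq_empty_iff_forall_notMem.mp hCV u ⟨hCbC hu.1, hu.2⟩)
          have hCS : compOf H (G.init e)
              ∈ {C0 : Subgraph G | C0.IsCompOf H ∧ C0.verts ∩ L.verts = ∅} := ⟨hCcomp, hCV⟩
          refine ⟨⟨hforest', ?_⟩, ?_⟩
          · intro C0 hC0
            by_cases hp : C0 = compOf (H.erase e) (G.init e)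
            · left; rw [hp]; exact hdCa
            · by_cases hq : C0 = compOf (H.erase e) (G.term e)
              · left; rw [hq]; exact hdCb
              · exact hSF.2 C0 (htrans2 C0 hC0 hp hq)
          · have heq : {C0 : Subgraph G | C0.IsCompOf (H.erase e) ∧ C0.verts ∩ L.verts = ∅}
                = insert (compOf (H.erase e) (G.init e))
                    (insert (compOf (H.erase e) (G.term e))
                      ({C0 : Subgraph G | C0.IsCompOf H ∧ C0.verts ∩ L.verts = ∅}
                        \ {compOf H (G.init e)})) := by
              ext C0
              simp only [Set.mem_insert_iff, Set.mem_diff, Set.mem_singleton_iff,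
                Set.mem_setOf_eq]
              constructor
              · rintro ⟨hc, hd⟩
                by_cases hp : C0 = compOf (H.erase e) (G.init e)
                · exact Or.inl hp
                · by_cases hq : C0 = compOf (H.erase e) (G.term e)
                  · exact Or.inr (Or.inl hq)
                  · refine Or.inr (Or.inr ⟨⟨htrans2 C0 hc hp hq, hd⟩, ?_⟩)
                    rintro rfl
                    exact hp (hc.eq_compOf haC)
              · rintro (rfl | rfl | ⟨⟨hc, hd⟩, hne⟩)
                · exact ⟨hCacomp', hdCa⟩
                · exact ⟨hCbcomp', hdCb⟩
                · exact ⟨htrans3 C0 hc hne, hd⟩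
            have h1 : compOf (H.erase e) (G.term e) ∉
                ({C0 : Subgraph G | C0.IsCompOf H ∧ C0.verts ∩ L.verts = ∅}
                  \ {compOf H (G.init e)}) := fun h => hnotCompb h.1.1
            have h2 : compOf (H.erase e) (G.init e) ∉
                insert (compOf (H.erase e) (G.term e))
                  ({C0 : Subgraph G | C0.IsCompOf H ∧ C0.verts ∩ L.verts = ∅}
                    \ {compOf H (G.init e)}) := by
              intro h
              rcases Set.mem_insert_iff.mp h with h | h
              · exact hCaCb_ne h
              · exact hnotCompa h.1.1
            have h3 : ({C0 : Subgraph G | C0.IsCompOf H ∧ C0.verts ∩ L.verts = ∅}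
                \ {compOf H (G.init e)}).ncard + 1
                = {C0 : Subgraph G | C0.IsCompOf H ∧ C0.verts ∩ L.verts = ∅}.ncard :=
              Set.ncard_diff_singleton_add_one hCS (Set.toFinite _)
            rw [heq, Set.ncard_insert_of_notMem h2 (Set.toFinite _),
              Set.ncard_insert_of_notMem h1 (Set.toFinite _)]
            omega
        · obtain ⟨w, hwC, hwL⟩ := hCV
          have hw_split : (H.erase e).Reaches (G.init e) w ∨
              (H.erase e).Reaches (G.term e) w := by
            rcases reaches_cases heH (mem_compOf.mp hwC) with h1 | h2 | h3
            · exact Or.inl h1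
            · exact Or.inr h2.2
            · exact absurd h3.1 hsep'
          rcases hw_split with hwP | hwP
          · obtain ⟨hinter, hCVsub⟩ := caseB (G.init e) w hav hwP hwL hCaC
            have hQdisj : (compOf (H.erase e) (G.term e)).verts ∩ L.verts = ∅ :=
              Set.eq_empty_iff_forall_notMem.mpr (by
                rintro u ⟨hu1, hu2⟩
                exact hCaCb u (hCVsub u (hCbC hu1) hu2) hu1)
            exact tailB (compOf (H.erase e) (G.init e)) (compOf (H.erase e) (G.term e)) w
              hCbcomp' hnotCompb (fun C0 h h1 h2 => htrans2 C0 h h1 h2)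
              (mem_compOf.mpr hwP) hwL hwC hQdisj hinter
          · obtain ⟨hinter, hCVsub⟩ := caseB (G.term e) w hbv hwP hwL hCbC
            have hQdisj : (compOf (H.erase e) (G.init e)).verts ∩ L.verts = ∅ :=
              Set.eq_empty_iff_forall_notMem.mpr (by
                rintro u ⟨hu1, hu2⟩
                exact hCaCb u hu1 (hCVsub u (hCaC hu1) hu2))
            exact tailB (compOf (H.erase e) (G.term e)) (compOf (H.erase e) (G.init e)) w
              hCacomp' hnotCompa (fun C0 h h1 h2 => htrans2 C0 h h2 h1)
              (mem_compOf.mpr hwP) hwL hwC hQdisj hinter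
      have hmeas : ((H.erase e).edges \ L.edges).ncard ≤ n := by
        have hsub : (H.erase e).edges \ L.edges ⊆ (H.edges \ L.edges) \ {e} := by
          rintro f ⟨hf1, hf2⟩
          exact ⟨⟨(mem_erase_edges.mp hf1).1, hf2⟩, (mem_erase_edges.mp hf1).2.1⟩
        have h4 := Set.ncard_diff_singleton_add_one
          (show e ∈ H.edges \ L.edges from ⟨heH, heL⟩) (Set.toFinite _)
        have h5 := Set.ncard_le_ncard hsub (Set.toFinite _)
        omega
      have hrec := ih (H.erase e) L hmeas hle' hSF'
      rw [hcnt, eulerChar_erase H heH] at hrec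
      push_cast at hrec
      linarith

end Subgraph

end SGraph

end Aux3

/-- If `Λ` (here: the full subgraph of the finite graph `G`) is a
strong forest relative to `Λ'`, and `k` is the number of connected components
of `Λ` disjoint from `Λ'`, then `χ(Λ) ≥ k + χ(Λ')`. -/
theorem euler_char_ge_of_strong_forest_rel
    (G : SGraph) [Fintype G.V] [Fintype G.E]
    (Λ' : SGraph.Subgraph G)
    (h : (G.full).StrongForestRel Λ') :
    (({C : SGraph.Subgraph G | C.IsCompOf G.full ∧ C.verts ∩ Λ'.verts = ∅}.ncard : ℤ))
        + Λ'.eulerChar ≤ (G.full).eulerChar := by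
  exact SGraph.Subgraph.main_aux ((G.full.edges \ Λ'.edges).ncard) G.full Λ' le_rfl
    ⟨Set.subset_univ _, Set.subset_univ _⟩ h
end

section
/- Let G be a finite nonempty connected directed graph in which every closed walk has exponent sum zero. Then G has a sink vertex and a source vertex. (This is the combinatorial content of the lemma that a finite connected simply connected 2-complex, all of whose 2-cells are attached along paths of exponent sum zero, has sink and source vertices.) -/
/-- A finite directed graph: edges `E`, vertices `V`, source and target maps. -/
structure DiGraph where
  V : Type
  E : Type
  s : E → V
  t : E → V

namespace DiGraph

variable (G : DiGraph)

/-- A step of a walk: an edge together with a direction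
(`true` = forwards, `false` = backwards). -/
def stepStart : G.E × Bool → G.V
  | (e, true) => G.s e
  | (e, false) => G.t e

def stepEnd : G.E × Bool → G.V
  | (e, true) => G.t e
  | (e, false) => G.s e

/-- A walk from `p` to `q`: a list of directed edge-traversals, consecutive
ones matching at endpoints, starting at `p` and ending at `q`. -/
def IsWalk (p q : G.V) (l : List (G.E × Bool)) : Prop :=
  List.Chain' (fun a b => G.stepEnd a = G.stepStart b) l ∧
    (∀ a, l.head? = some a → G.stepStart a = p) ∧
    (∀ a, l.getLast? = some a → G.stepEnd a = q) ∧
    (l = [] → p = q)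

/-- The exponent sum of a walk: forward traversals minus backward traversals. -/
def expSum (l : List (G.E × Bool)) : ℤ :=
  (l.map (fun a => if a.2 then (1 : ℤ) else -1)).sum

/-- The directed graph is connected if any two vertices are joined by a walk
(in the underlying undirected graph). -/
def Connected : Prop := ∀ p q : G.V, ∃ l, G.IsWalk p q l

end DiGraph

namespace MyAux

open DiGraph

def flipStep (G : DiGraph) (a : G.E × Bool) : G.E × Bool := (a.1, !a.2)

lemma stepStart_flip (G : DiGraph) (a : G.E × Bool) :
    G.stepStart (flipStep G a) = G.stepEnd a := by
  rcases a with ⟨e, b⟩; cases b <;> rfl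

lemma stepEnd_flip (G : DiGraph) (a : G.E × Bool) :
    G.stepEnd (flipStep G a) = G.stepStart a := by
  rcases a with ⟨e, b⟩; cases b <;> rfl

lemma walk_append (G : DiGraph) {p q r : G.V} {l m : List (G.E × Bool)}
    (h1 : G.IsWalk p q l) (h2 : G.IsWalk q r m) : G.IsWalk p r (l ++ m) := by
  obtain ⟨c1, hd1, lt1, e1⟩ := h1
  obtain ⟨c2, hd2, lt2, e2⟩ := h2
  rcases eq_or_ne l [] with rfl | hl
  · obtain rfl := e1 rfl
    rw [List.nil_append]
    exact ⟨c2, hd2, lt2, e2⟩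
  rcases eq_or_ne m [] with rfl | hm
  · obtain rfl := e2 rfl
    rw [List.append_nil]
    exact ⟨c1, hd1, lt1, e1⟩
  refine ⟨?_, ?_, ?_, ?_⟩
  · unfold List.Chain'; rw [List.isChain_append]
    refine ⟨c1, c2, fun x hx y hy => ?_⟩
    rw [lt1 x hx, hd2 y hy]
  · intro a ha
    apply hd1
    rwa [List.head?_append_of_ne_nil _ hl] at ha
  · intro a ha
    apply lt2
    rwa [List.getLast?_append_of_ne_nil _ hm] at ha
  · intro h
    exact absurd (List.append_eq_nil_iff.mp h).1 hl

lemma walk_reverse (G : DiGraph) {p q : G.V} {l : List (G.E × Bool)}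
    (h : G.IsWalk p q l) : G.IsWalk q p ((l.reverse).map (flipStep G)) := by
  obtain ⟨c, hd, lt, e⟩ := h
  refine ⟨?_, ?_, ?_, ?_⟩
  · unfold List.Chain'; rw [List.isChain_map, List.isChain_reverse]
    refine c.imp fun a b hab => ?_
    simp only [flip, stepStart_flip, stepEnd_flip]
    exact hab.symm
  · intro a ha
    rw [List.head?_map, List.head?_reverse] at ha
    obtain ⟨b, hb, rfl⟩ := Option.map_eq_some_iff.mp ha
    rw [stepStart_flip]
    exact lt b hb
  · intro a ha
    rw [List.getLast?_map, List.getLast?_reverse] at ha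
    obtain ⟨b, hb, rfl⟩ := Option.map_eq_some_iff.mp ha
    rw [stepEnd_flip]
    exact hd b hb
  · intro h
    simp only [List.map_eq_nil_iff, List.reverse_eq_nil_iff] at h
    exact (e h).symm

lemma expSum_append (G : DiGraph) (l m : List (G.E × Bool)) :
    G.expSum (l ++ m) = G.expSum l + G.expSum m := by
  simp [DiGraph.expSum]

lemma expSum_revflip (G : DiGraph) (l : List (G.E × Bool)) :
    G.expSum ((l.reverse).map (flipStep G)) = -G.expSum l := by
  induction l with
  | nil => simp [DiGraph.expSum]
  | cons a l ih =>
    rcases a with ⟨e, b⟩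
    simp only [List.reverse_cons, List.map_append, List.map_cons, List.map_nil]
    rw [expSum_append, ih]
    cases b <;> simp [DiGraph.expSum, flipStep]

end MyAux

/-- A finite nonempty connected directed graph in which every
closed walk has exponent sum zero has a sink vertex and a source vertex. -/
theorem exists_sink_and_source
    (G : DiGraph) [Fintype G.V] [Fintype G.E] [Nonempty G.V]
    (hconn : G.Connected)
    (hzero : ∀ (v : G.V) (l : List (G.E × Bool)), G.IsWalk v v l → G.expSum l = 0) :
    (∃ v : G.V, ∀ e : G.E, (G.s e = v ∨ G.t e = v) → G.t e = v) ∧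
      (∃ v : G.V, ∀ e : G.E, (G.s e = v ∨ G.t e = v) → G.s e = v) := by
  classical
  obtain ⟨b⟩ := (inferInstance : Nonempty G.V)
  choose w hw using hconn
  set h : G.V → ℤ := fun v => G.expSum (w b v) with hdef
  have wd : ∀ (p q : G.V) (l : List (G.E × Bool)), G.IsWalk p q l →
      G.expSum l = h q - h p := by
    intro p q l hl
    have hcl : G.IsWalk b b
        (w b p ++ (l ++ ((w b q).reverse.map (MyAux.flipStep G)))) :=
      MyAux.walk_append G (hw b p)
        (MyAux.walk_append G hl (MyAux.walk_reverse G (hw b q)))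
    have := hzero b _ hcl
    rw [MyAux.expSum_append, MyAux.expSum_append, MyAux.expSum_revflip] at this
    simp only [hdef]
    omega
  have step : ∀ e : G.E, h (G.t e) = h (G.s e) + 1 := by
    intro e
    have hw1 : G.IsWalk (G.s e) (G.t e) [(e, true)] := by
      refine ⟨List.isChain_singleton _, ?_, ?_, by simp⟩ <;> simp [DiGraph.stepStart, DiGraph.stepEnd]
    have := wd _ _ _ hw1
    simp [DiGraph.expSum] at this
    omega
  constructor
  · obtain ⟨v, hv⟩ := Finite.exists_max h
    refine ⟨v, fun e he => ?_⟩
    rcases he with hs | ht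
    · exfalso
      have := hv (G.t e)
      rw [step e, hs] at this
      omega
    · exact ht
  · obtain ⟨v, hv⟩ := Finite.exists_min h
    refine ⟨v, fun e he => ?_⟩
    rcases he with hs | ht
    · exact hs
    · exfalso
      have := hv (G.s e)
      rw [← ht] at this
      rw [step e] at this
      omega
end
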